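/- Let X = {x ∈ ℝ³ : ‖x‖ = 1 and |x₃| ≤ 1/2} ∪ {x ∈ ℝ³ : x₁² + x₂² = 3/4 and |x₃| ≤ 1/2}, i.e. the 2-sphere S² with the two open polar caps removed, together with the cylinder joining the two resulting boundary circles through the interior. Then X, with the subspace topology of ℝ³, is homeomorphic to the torus S¹ × S¹. (This is 2-dimensional 0-surgery on S²: removing two discs S⁰ × D² around the poles and replacing them by the cylinder D¹ × S¹ changes the homeomorphism type from the 2-sphere to that of the torus.) -/

import Mathlib

/-- The unit circle `S¹ = {x ∈ ℝ² : ‖x‖ = 1}`. -/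
def S1 : Set (EuclideanSpace ℝ (Fin 2)) := Metric.sphere 0 1

/-- The 2-sphere with the two open polar caps removed:
`{x ∈ ℝ³ : ‖x‖ = 1 and |x₃| ≤ 1/2}`. -/
def SphereBand : Set (EuclideanSpace ℝ (Fin 3)) :=
  {x | ‖x‖ = 1 ∧ |x 2| ≤ 1 / 2}

/-- The cylinder joining the two boundary circles through the interior:
`{x ∈ ℝ³ : x₁² + x₂² = 3/4 and |x₃| ≤ 1/2}`. -/
def Cyl : Set (EuclideanSpace ℝ (Fin 3)) :=
  {x | (x 0) ^ 2 + (x 1) ^ 2 = 3 / 4 ∧ |x 2| ≤ 1 / 2}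

lemma mem_S1_iff (x : EuclideanSpace ℝ (Fin 2)) : x ∈ S1 ↔ (x 0)^2 + (x 1)^2 = 1 := by
  rw [S1, mem_sphere_zero_iff_norm, EuclideanSpace.norm_eq]
  simp only [Fin.sum_univ_two, Real.norm_eq_abs, sq_abs]
  rw [Real.sqrt_eq_one]

lemma norm3_eq (x : EuclideanSpace ℝ (Fin 3)) : ‖x‖ = 1 ↔ (x 0)^2 + (x 1)^2 + (x 2)^2 = 1 := by
  rw [EuclideanSpace.norm_eq]
  simp only [Fin.sum_univ_three, Real.norm_eq_abs, sq_abs]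
  rw [Real.sqrt_eq_one]

/-- radius profile -/
noncomputable def rr (a : ℝ) : ℝ := Real.sqrt (3 + (max a 0)^2) / 2

lemma rr_sq (a : ℝ) : rr a ^ 2 = (3 + (max a 0)^2) / 4 := by
  have h : (0:ℝ) ≤ 3 + (max a 0)^2 := by positivity
  rw [rr, div_pow, Real.sq_sqrt h]; norm_num

lemma rr_pos (a : ℝ) : 0 < rr a := by
  have h : (0:ℝ) < 3 + (max a 0)^2 := by positivity
  exact div_pos (Real.sqrt_pos.2 h) (by norm_num)

lemma rr_nonneg (a : ℝ) : 0 ≤ rr a := (rr_pos a).le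

lemma rr_cont : Continuous rr := by
  apply Continuous.div_const
  exact (continuous_const.add ((continuous_id.max continuous_const).pow 2)).sqrt

/-- the map from the torus to the surgered sphere -/
noncomputable def Fmap (pq : ↥S1 × ↥S1) : EuclideanSpace ℝ (Fin 3) :=
  WithLp.toLp 2 ![rr (pq.1.1 0) * pq.2.1 0, rr (pq.1.1 0) * pq.2.1 1, pq.1.1 1 / 2]


set_option maxHeartbeats 800000 in
lemma Fmap_mem (pq : ↥S1 × ↥S1) : Fmap pq ∈ SphereBand ∪ Cyl := by
  obtain ⟨⟨p, hp⟩, ⟨q, hq⟩⟩ := pq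
  rw [mem_S1_iff] at hp hq
  have habs : |p 1 / 2| ≤ 1/2 := by
    rw [abs_div, abs_of_pos (show (0:ℝ) < 2 by norm_num)]
    have : |p 1| ≤ 1 := by nlinarith [sq_abs (p 1), sq_nonneg (p 0), abs_nonneg (p 1)]
    linarith
  rcases le_or_gt 0 (p 0) with h0 | h0
  · left
    constructor
    · rw [norm3_eq]
      show (rr (p 0) * q 0)^2 + (rr (p 0) * q 1)^2 + (p 1 / 2)^2 = 1
      have := rr_sq (p 0)
      rw [max_eq_left h0] at this
      nlinarith
    · exact habs
  · right
    constructor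
    · show (rr (p 0) * q 0)^2 + (rr (p 0) * q 1)^2 = 3/4
      have := rr_sq (p 0)
      rw [max_eq_right h0.le] at this
      nlinarith
    · exact habs

set_option maxHeartbeats 800000 in
lemma Fmap_cont : Continuous Fmap := by
  have h1 : Continuous fun pq : ↥S1 × ↥S1 => (pq.1.1 0 : ℝ) :=
    (PiLp.continuous_apply 2 _ (0 : Fin 2)).comp (continuous_subtype_val.comp continuous_fst)
  have h2 : Continuous fun pq : ↥S1 × ↥S1 => (pq.1.1 1 : ℝ) :=
    (PiLp.continuous_apply 2 _ (1 : Fin 2)).comp (continuous_subtype_val.comp continuous_fst)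
  have h3 : Continuous fun pq : ↥S1 × ↥S1 => (pq.2.1 0 : ℝ) :=
    (PiLp.continuous_apply 2 _ (0 : Fin 2)).comp (continuous_subtype_val.comp continuous_snd)
  have h4 : Continuous fun pq : ↥S1 × ↥S1 => (pq.2.1 1 : ℝ) :=
    (PiLp.continuous_apply 2 _ (1 : Fin 2)).comp (continuous_subtype_val.comp continuous_snd)
  apply (PiLp.continuous_toLp 2 _).comp
  apply continuous_pi
  intro i
  fin_cases i
  · exact ((rr_cont.comp h1).mul h3)
  · exact ((rr_cont.comp h1).mul h4)
  · exact h2.div_const 2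

set_option maxHeartbeats 800000 in
lemma Fmap_inj : Function.Injective Fmap := by
  rintro ⟨⟨p, hp⟩, ⟨q, hq⟩⟩ ⟨⟨p', hp'⟩, ⟨q', hq'⟩⟩ h
  rw [mem_S1_iff] at hp hq hp' hq'
  have e0 : rr (p 0) * q 0 = rr (p' 0) * q' 0 := congrArg (fun v : EuclideanSpace ℝ (Fin 3) => v 0) h
  have e1 : rr (p 0) * q 1 = rr (p' 0) * q' 1 := congrArg (fun v : EuclideanSpace ℝ (Fin 3) => v 1) h
  have e2 : p 1 / 2 = p' 1 / 2 := congrArg (fun v : EuclideanSpace ℝ (Fin 3) => v 2) h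
  have hb : p 1 = p' 1 := by linarith
  have f0 := congrArg (fun t : ℝ => t^2) e0
  have f1 := congrArg (fun t : ℝ => t^2) e1
  simp only [mul_pow] at f0 f1
  have hrsq : rr (p 0) ^ 2 = rr (p' 0) ^ 2 := by
    linear_combination f0 + f1 - rr (p 0)^2 * hq + rr (p' 0)^2 * hq'
  have hr : rr (p 0) = rr (p' 0) := by
    nlinarith [rr_pos (p 0), rr_pos (p' 0)]
  have hsq : (max (p 0) 0)^2 = (max (p' 0) 0)^2 := by
    have g1 := rr_sq (p 0); have g2 := rr_sq (p' 0)
    nlinarith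
  have hmax : max (p 0) 0 = max (p' 0) 0 := by
    have h1 : 0 ≤ max (p 0) 0 := le_max_right _ _
    have h2 : 0 ≤ max (p' 0) 0 := le_max_right _ _
    nlinarith
  have ha2 : (p 0)^2 = (p' 0)^2 := by linear_combination hp - hp' - (p 1 + p' 1) * hb
  have ha : p 0 = p' 0 := by
    rcases le_total (p 0) 0 with h0 | h0 <;> rcases le_total (p' 0) 0 with h0' | h0'
    · nlinarith
    · rw [max_eq_right h0, max_eq_left h0'] at hmax; nlinarith
    · rw [max_eq_left h0, max_eq_right h0'] at hmax; nlinarith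
    · rw [max_eq_left h0, max_eq_left h0'] at hmax; exact hmax
  have hc : q 0 = q' 0 := by
    rw [ha] at e0; exact mul_left_cancel₀ (rr_pos (p' 0)).ne' e0
  have hd : q 1 = q' 1 := by
    rw [ha] at e1; exact mul_left_cancel₀ (rr_pos (p' 0)).ne' e1
  have hpeq : p = p' := by
    ext i; fin_cases i; exacts [ha, hb]
  have hqeq : q = q' := by
    ext i; fin_cases i; exacts [hc, hd]
  simp only [Prod.mk.injEq, Subtype.mk.injEq]
  exact ⟨hpeq, hqeq⟩

set_option maxHeartbeats 800000 in
lemma Fmap_surj (x : EuclideanSpace ℝ (Fin 3)) (hx : x ∈ SphereBand ∪ Cyl) :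
    ∃ pq : ↥S1 × ↥S1, Fmap pq = x := by
  have key : ∀ (s : ℝ), s = 1 ∨ s = -1 →
      ∀ _hz : |x 2| ≤ 1/2, (x 0)^2 + (x 1)^2 = rr (s * Real.sqrt (1 - 4 * (x 2)^2))^2 →
      ∃ pq : ↥S1 × ↥S1, Fmap pq = x := by
    intro s hs hz hR
    set z := x 2 with hzdef
    have hz2 : 4 * z^2 ≤ 1 := by
      have := abs_le.1 hz; nlinarith
    set a := s * Real.sqrt (1 - 4 * z^2) with hadef
    have hasq : a^2 = 1 - 4 * z^2 := by
      rw [hadef, mul_pow, Real.sq_sqrt (by linarith)]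
      rcases hs with h | h <;> rw [h] <;> ring
    have hp : (!₂[a, 2*z] : EuclideanSpace ℝ (Fin 2)) ∈ S1 := by
      rw [mem_S1_iff]; show a^2 + (2*z)^2 = 1; rw [hasq]; ring
    set R := rr a with hRdef
    have hRpos := rr_pos a
    have hRsq : (x 0)^2 + (x 1)^2 = R^2 := hR
    have hq : (!₂[x 0 / R, x 1 / R] : EuclideanSpace ℝ (Fin 2)) ∈ S1 := by
      rw [mem_S1_iff]
      show (x 0 / R)^2 + (x 1 / R)^2 = 1
      rw [div_pow, div_pow, ← add_div, hRsq]
      exact div_self (pow_ne_zero 2 hRpos.ne')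
    refine ⟨⟨⟨_, hp⟩, ⟨_, hq⟩⟩, ?_⟩
    ext i
    fin_cases i
    · show rr a * (x 0 / R) = x 0
      rw [← hRdef]; field_simp
      exact mul_div_cancel_left₀ _ hRpos.ne'
    · show rr a * (x 1 / R) = x 1
      rw [← hRdef]; field_simp
      exact mul_div_cancel_left₀ _ hRpos.ne'
    · show (2 * z) / 2 = x 2
      rw [hzdef]; ring
  rcases hx with ⟨h1, hz⟩ | ⟨h1, hz⟩
  · rw [norm3_eq] at h1
    refine key 1 (Or.inl rfl) hz ?_
    have hz2 : 4 * (x 2)^2 ≤ 1 := by have := abs_le.1 hz; nlinarith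
    have hs : Real.sqrt (1 - 4 * (x 2)^2) ≥ 0 := Real.sqrt_nonneg _
    have hmax : max (1 * Real.sqrt (1 - 4 * (x 2)^2)) 0 = Real.sqrt (1 - 4 * (x 2)^2) := by
      rw [one_mul, max_eq_left hs]
    rw [rr_sq, hmax, Real.sq_sqrt (by linarith)]
    nlinarith
  · refine key (-1) (Or.inr rfl) hz ?_
    have hs : Real.sqrt (1 - 4 * (x 2)^2) ≥ 0 := Real.sqrt_nonneg _
    have hmax : max ((-1) * Real.sqrt (1 - 4 * (x 2)^2)) 0 = 0 := by
      rw [max_eq_right]; nlinarith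
    rw [rr_sq, hmax]
    rw [h1]; norm_num

/-- 2-dimensional 0-surgery on `S²`: removing the two polar discs and gluing in the
cylinder produces a space homeomorphic to the torus `S¹ × S¹`. -/
theorem two_dim_zero_surgery_on_sphere :
    Nonempty (↥(SphereBand ∪ Cyl) ≃ₜ (↥S1 × ↥S1)) := by
  have hcomp : IsCompact S1 := isCompact_sphere 0 1
  haveI : CompactSpace ↥S1 := isCompact_iff_compactSpace.1 hcomp
  have hbij : Function.Bijective (fun pq : ↥S1 × ↥S1 =>
      (⟨Fmap pq, Fmap_mem pq⟩ : ↥(SphereBand ∪ Cyl))) := by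
    constructor
    · intro a b h
      exact Fmap_inj (congrArg Subtype.val h)
    · rintro ⟨x, hx⟩
      obtain ⟨pq, hpq⟩ := Fmap_surj x hx
      exact ⟨pq, Subtype.ext hpq⟩
  have hcont : Continuous (fun pq : ↥S1 × ↥S1 =>
      (⟨Fmap pq, Fmap_mem pq⟩ : ↥(SphereBand ∪ Cyl))) := Fmap_cont.subtype_mk _
  exact ⟨(hcont.homeoOfEquivCompactToT2 (f := Equiv.ofBijective _ hbij)).symm⟩
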